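/- Let n ∈ ℕ, σ∨ = ℚ^{n+1}_{≥0}, and P an integral σ∨-polyhedron contained in σ∨. Then P is normal if and only if (sP) ∩ ℤ^{n+1} = E_{[s,P]} for all s ∈ {1, …, n}. In other words, checking the normality condition for the first n dilates suffices. -/

import Mathlib

open scoped Pointwise
open Finset

namespace Paper

/-- Standard pairing on `ℚⁿ`. -/
def dot {n : ℕ} (m v : Fin n → ℚ) : ℚ := ∑ i, m i * v i

/-- Dual cone `σ∨ = {m | ∀ v ∈ σ, ⟨m,v⟩ ≥ 0}`. -/
def dualCone {n : ℕ} (σ : Set (Fin n → ℚ)) : Set (Fin n → ℚ) :=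
  {m | ∀ v ∈ σ, 0 ≤ dot m v}

/-- A polyhedral cone: the cone generated by finitely many vectors. -/
def IsPolyhedralCone {n : ℕ} (σ : Set (Fin n → ℚ)) : Prop :=
  ∃ (k : ℕ) (g : Fin k → Fin n → ℚ),
    σ = {v | ∃ c : Fin k → ℚ, (∀ i, 0 ≤ c i) ∧ v = ∑ i, c i • g i}

/-- A pointed (strongly convex) cone contains no line. -/
def Pointed {n : ℕ} (σ : Set (Fin n → ℚ)) : Prop := ∀ v ∈ σ, -v ∈ σ → v = 0

/-- The canonical embedding `ℤⁿ → ℚⁿ`. -/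
def Lq {n : ℕ} (m : Fin n → ℤ) : Fin n → ℚ := fun i => (m i : ℚ)

/-- A rational vector is a lattice point if all coordinates are integers. -/
def IsLatticePt {n : ℕ} (v : Fin n → ℚ) : Prop := ∀ i, ∃ z : ℤ, v i = (z : ℚ)

/-- A `σ`-polyhedron: Minkowski sum of a (nonempty) polytope with the cone `σ`. -/
def IsSigmaPolyhedron {n : ℕ} (σ Δ : Set (Fin n → ℚ)) : Prop :=
  ∃ F : Finset (Fin n → ℚ), F.Nonempty ∧ Δ = convexHull ℚ (↑F : Set (Fin n → ℚ)) + σ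

/-- An integral `σv`-polyhedron: Minkowski sum of a lattice polytope with `σv`. -/
def IsIntegralPoly {n : ℕ} (σv P : Set (Fin n → ℚ)) : Prop :=
  ∃ F : Finset (Fin n → ℤ), F.Nonempty ∧ P = convexHull ℚ (Lq '' (↑F : Set (Fin n → ℤ))) + σv

/-- The `e`-fold Minkowski sum `eP` of `P`, with the convention `0P = σv`. -/
def mink {n : ℕ} (σv P : Set (Fin n → ℚ)) : ℕ → Set (Fin n → ℚ)
  | 0 => σv
  | 1 => P
  | (e + 2) => mink σv P (e + 1) + P

/-- The semigroup `σ∨ ∩ ℤⁿ` of lattice points of the dual cone. -/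
def latticeDual {n : ℕ} (σ : Set (Fin n → ℚ)) : AddSubmonoid (Fin n → ℤ) where
  carrier := {m | Lq m ∈ dualCone σ}
  zero_mem' := by
    intro v hv
    simp [dot, Lq]
  add_mem' := by
    intro a b ha hb v hv
    have h1 := ha v hv
    have h2 := hb v hv
    have h : dot (Lq (a + b)) v = dot (Lq a) v + dot (Lq b) v := by
      simp only [dot, Lq, Pi.add_apply]
      rw [← Finset.sum_add_distrib]
      apply Finset.sum_congr rfl
      intro i _
      push_cast
      ring
    rw [Set.mem_setOf_eq] at *
    simpa [dualCone, h] using add_nonneg h1 h2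

/-- The monomial `χ^m` in the semigroup algebra `k[σ∨ ∩ ℤⁿ]`. -/
noncomputable def mono (k : Type*) [CommRing k] {n : ℕ} (σ : Set (Fin n → ℚ))
    (m : latticeDual σ) : AddMonoidAlgebra k (latticeDual σ) :=
  AddMonoidAlgebra.single m 1

/-- The monomial ideal `I[P]` generated by the monomials `χ^m`, `m ∈ P ∩ ℤⁿ`. -/
noncomputable def idealOf (k : Type*) [CommRing k] {n : ℕ} (σ : Set (Fin n → ℚ))
    (P : Set (Fin n → ℚ)) : Ideal (AddMonoidAlgebra k (latticeDual σ)) :=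
  Ideal.span {f | ∃ m : latticeDual σ, Lq (m : Fin n → ℤ) ∈ P ∧ f = mono k σ m}

/-- `a` satisfies an equation of integral dependence over the ideal `I`:
`a^r + λ₁ a^(r-1) + ⋯ + λ_r = 0` with `λᵢ ∈ Iⁱ`. -/
def IntegralOverIdeal {A : Type*} [CommRing A] (I : Ideal A) (a : A) : Prop :=
  ∃ r : ℕ, 0 < r ∧ ∃ c : ℕ → A, (∀ i ∈ Finset.Icc 1 r, c i ∈ I ^ i) ∧
    a ^ r + ∑ i ∈ Finset.Icc 1 r, c i * a ^ (r - i) = 0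

/-- A monomial (torus-homogeneous) ideal of `k[σ∨ ∩ ℤⁿ]`. -/
def IsMonomialIdeal (k : Type*) [CommRing k] {n : ℕ} (σ : Set (Fin n → ℚ))
    (I : Ideal (AddMonoidAlgebra k (latticeDual σ))) : Prop :=
  ∃ S : Set (latticeDual σ), I = Ideal.span {f | ∃ m ∈ S, f = mono k σ m}

/-- The nonnegative orthant `ℚ^{n+1}_{≥0}`. -/
def orthant (n : ℕ) : Set (Fin (n + 1) → ℚ) := {v | ∀ i, 0 ≤ v i}

variable {n : ℕ}

/-- Auxiliary: representation of a point as a nonneg combination of lattice points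
of `P` with coefficient sum `t`, plus a nonnegative vector. -/
def Good (P : Set (Fin (n+1) → ℚ)) (t : ℚ) (x : Fin (n+1) → ℚ) : Prop :=
  ∃ (k : ℕ) (v : Fin k → (Fin (n+1) → ℤ)) (c : Fin k → ℚ) (w : Fin (n+1) → ℚ),
    (∀ j, Lq (v j) ∈ P) ∧ (∀ j, 0 ≤ c j) ∧ (∑ j, c j = t) ∧ (∀ i, 0 ≤ w i) ∧
    x = (∑ j, c j • Lq (v j)) + w

lemma Lq_injective : Function.Injective (Lq (n := n)) := by
  intro a b h
  funext i
  have := congrFun h i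
  simpa [Lq] using this

lemma Lq_add (a b : Fin n → ℤ) : Lq (a + b) = Lq a + Lq b := by
  funext i; simp [Lq]

lemma Lq_sub (a b : Fin n → ℤ) : Lq (a - b) = Lq a - Lq b := by
  funext i; simp [Lq]

lemma orthant_convex : Convex ℚ (orthant n) := by
  intro x hx y hy a b ha hb _
  intro i
  have hx' : 0 ≤ x i := hx i
  have hy' : 0 ≤ y i := hy i
  simp only [Pi.add_apply, Pi.smul_apply, smul_eq_mul]
  exact add_nonneg (mul_nonneg ha hx') (mul_nonneg hb hy')

lemma zero_mem_orthant : (0 : Fin (n+1) → ℚ) ∈ orthant n := fun i => le_refl 0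

section P

variable {P : Set (Fin (n+1) → ℚ)} {F : Finset (Fin (n+1) → ℤ)}

lemma convex_P (hPF : P = convexHull ℚ (Lq '' (F : Set (Fin (n+1) → ℤ))) + orthant n) :
    Convex ℚ P := by
  rw [hPF]; exact (convex_convexHull ℚ _).add orthant_convex

lemma add_orth_mem (hPF : P = convexHull ℚ (Lq '' (F : Set (Fin (n+1) → ℤ))) + orthant n)
    {x w : Fin (n+1) → ℚ} (hx : x ∈ P) (hw : ∀ i, 0 ≤ w i) : x + w ∈ P := by
  rw [hPF] at hx ⊢
  obtain ⟨p, hp, q, hq, rfl⟩ := Set.mem_add.mp hx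
  exact Set.mem_add.mpr ⟨p, hp, q + w, fun i => add_nonneg (hq i) (hw i), by abel⟩

lemma sum_mem_P (hconv : Convex ℚ P) {k : ℕ} (v : Fin k → (Fin (n+1) → ℤ)) (c : Fin k → ℚ)
    (hv : ∀ j, Lq (v j) ∈ P) (hc : ∀ j, 0 ≤ c j) (h1 : ∑ j, c j = 1) :
    (∑ j, c j • Lq (v j)) ∈ P :=
  hconv.sum_mem (fun i _ => hc i) h1 (fun i _ => hv i)

lemma smul_mem_mink {z : Fin (n+1) → ℚ} (hz : z ∈ P) :
    ∀ s : ℕ, 1 ≤ s → (s : ℚ) • z ∈ mink (orthant n) P s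
  | 1, _ => by simpa [mink] using hz
  | (e+2), _ => by
    have h1 : ((e+2 : ℕ) : ℚ) • z = ((e+1 : ℕ) : ℚ) • z + z := by
      have h2 : ((e+2 : ℕ) : ℚ) = ((e+1 : ℕ) : ℚ) + 1 := by push_cast; ring
      rw [h2, add_smul, one_smul]
    show _ ∈ mink (orthant n) P (e+1) + P
    rw [h1]
    exact Set.add_mem_add (smul_mem_mink hz (e+1) (by omega)) hz

lemma good_to_mink (hPF : P = convexHull ℚ (Lq '' (F : Set (Fin (n+1) → ℤ))) + orthant n)
    {s : ℕ} (hs : 1 ≤ s) {x : Fin (n+1) → ℚ} (h : Good P (s : ℚ) x) :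
    x ∈ mink (orthant n) P s := by
  obtain ⟨k, v, c, w, hv, hc, hsum, hw, rfl⟩ := h
  have hs0 : ((s : ℚ)) ≠ 0 := by positivity
  have hz : (s:ℚ)⁻¹ • ((∑ j, c j • Lq (v j)) + w)
      = (∑ j, ((s:ℚ)⁻¹ * c j) • Lq (v j)) + (s:ℚ)⁻¹ • w := by
    rw [smul_add, Finset.smul_sum]
    congr 1
    refine Finset.sum_congr rfl fun j _ => ?_
    rw [smul_smul]
  have hzP : (s:ℚ)⁻¹ • ((∑ j, c j • Lq (v j)) + w) ∈ P := by
    rw [hz]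
    refine add_orth_mem hPF ?_ fun i => ?_
    · refine sum_mem_P (convex_P hPF) v _ hv (fun j => mul_nonneg (by positivity) (hc j)) ?_
      rw [← Finset.mul_sum, hsum, inv_mul_cancel₀ hs0]
    · simp only [Pi.smul_apply, smul_eq_mul]
      exact mul_nonneg (by positivity) (hw i)
  have := smul_mem_mink hzP s hs
  rwa [smul_inv_smul₀ hs0] at this

lemma good_add {P : Set (Fin (n+1) → ℚ)} {a b : ℚ} {x y : Fin (n+1) → ℚ}
    (hx : Good P a x) (hy : Good P b y) : Good P (a + b) (x + y) := by
  obtain ⟨k1, v1, c1, w1, h1, h2, h3, h4, h5⟩ := hx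
  obtain ⟨k2, v2, c2, w2, g1, g2, g3, g4, g5⟩ := hy
  refine ⟨k1 + k2, Fin.append v1 v2, Fin.append c1 c2, w1 + w2, ?_, ?_, ?_, ?_, ?_⟩
  · intro j
    refine Fin.addCases (fun i => ?_) (fun i => ?_) j
    · simpa [Fin.append_left] using h1 i
    · simpa [Fin.append_right] using g1 i
  · intro j
    refine Fin.addCases (fun i => ?_) (fun i => ?_) j
    · simpa [Fin.append_left] using h2 i
    · simpa [Fin.append_right] using g2 i
  · rw [Fin.sum_univ_add]
    simp only [Fin.append_left, Fin.append_right, h3, g3]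
  · intro i; exact add_nonneg (h4 i) (g4 i)
  · rw [h5, g5, Fin.sum_univ_add]
    simp only [Fin.append_left, Fin.append_right]
    abel

lemma good_one (hPF : P = convexHull ℚ (Lq '' (F : Set (Fin (n+1) → ℤ))) + orthant n)
    {x : Fin (n+1) → ℚ} (hx : x ∈ P) : Good P 1 x := by
  rw [hPF] at hx
  obtain ⟨p, hp, w, hw, rfl⟩ := Set.mem_add.mp hx
  rw [show (Lq '' (F : Set (Fin (n+1) → ℤ))) = ((F.image Lq : Finset (Fin (n+1) → ℚ)) : Set (Fin (n+1) → ℚ)) by rw [Finset.coe_image], Finset.convexHull_eq] at hp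
  obtain ⟨wt, hwt0, hwt1, hcm⟩ := hp
  rw [Finset.centerMass_eq_of_sum_1 _ _ hwt1] at hcm
  have hsum_img : ∀ (g : (Fin (n+1) → ℚ) → (Fin (n+1) → ℚ)),
      ∑ y ∈ F.image Lq, wt y • g y = ∑ u ∈ F, wt (Lq u) • g (Lq u) := by
    intro g
    rw [Finset.sum_image (fun a _ b _ h => Lq_injective h)]
  have hp' : p = ∑ u ∈ F, wt (Lq u) • Lq u := by
    rw [← hcm, Finset.sum_image (fun a _ b _ h => Lq_injective h)]
    rfl
  have hwt1' : ∑ u ∈ F, wt (Lq u) = 1 := by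
    rw [← hwt1, Finset.sum_image (fun a _ b _ h => Lq_injective h)]
  refine ⟨F.card, fun t => (F.equivFin.symm t : Fin (n+1) → ℤ),
    fun t => wt (Lq (F.equivFin.symm t : Fin (n+1) → ℤ)), w, ?_, ?_, ?_, hw, ?_⟩
  · intro t
    rw [hPF]
    refine Set.mem_add.mpr ⟨Lq ((F.equivFin.symm t : Fin (n+1) → ℤ)), ?_, 0, zero_mem_orthant, add_zero _⟩
    exact subset_convexHull ℚ _ ⟨_, (F.equivFin.symm t).2, rfl⟩
  · intro t
    exact hwt0 _ (Finset.mem_image_of_mem Lq (F.equivFin.symm t).2)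
  · rw [Equiv.sum_comp F.equivFin.symm (fun (u : ↥F) => wt (Lq (u : Fin (n+1) → ℤ))),
      Finset.sum_coe_sort F (fun u => wt (Lq u))]
    exact hwt1'
  · rw [Equiv.sum_comp F.equivFin.symm
      (fun (u : ↥F) => wt (Lq (u : Fin (n+1) → ℤ)) • Lq (u : Fin (n+1) → ℤ)),
      Finset.sum_coe_sort F (fun u => wt (Lq u) • Lq u)]
    rw [hp']

lemma mink_to_good (hPF : P = convexHull ℚ (Lq '' (F : Set (Fin (n+1) → ℤ))) + orthant n) :
    ∀ (s : ℕ), 1 ≤ s → ∀ x, x ∈ mink (orthant n) P s → Good P (s : ℚ) x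
  | 1, _, x, hx => by simpa using good_one hPF hx
  | (e+2), _, x, hx => by
    obtain ⟨y, hy, z, hz, rfl⟩ := Set.mem_add.mp hx
    have h1 := mink_to_good hPF (e+1) (by omega) y hy
    have h2 := good_one hPF hz
    have h3 := good_add h1 h2
    have : ((e+1 : ℕ) : ℚ) + 1 = ((e+2 : ℕ) : ℚ) := by push_cast; ring
    rwa [this] at h3

lemma sum_mem_mink :
    ∀ (s : ℕ), 1 ≤ s → ∀ f : Fin s → (Fin (n+1) → ℤ), (∀ i, Lq (f i) ∈ P) →
      Lq (∑ i, f i) ∈ mink (orthant n) P s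
  | 1, _, f, hf => by
    have : (∑ i, f i) = f 0 := by simp
    rw [this]
    exact hf 0
  | (e+2), _, f, hf => by
    show _ ∈ mink (orthant n) P (e+1) + P
    have : (∑ i, f i) = (∑ i : Fin (e+1), f (Fin.castSucc i)) + f (Fin.last _) :=
      Fin.sum_univ_castSucc f
    rw [this, Lq_add]
    exact Set.add_mem_add (sum_mem_mink (e+1) (by omega) _ (fun i => hf _)) (hf _)

end P

def rowQ {n : ℕ} (v : Fin (n+1) → ℤ) : Fin (n+2) → ℚ := Fin.snoc (Lq v) 1

def MQ {n : ℕ} (v : Fin (n+2) → (Fin (n+1) → ℤ)) : Matrix (Fin (n+2)) (Fin (n+2)) ℚ :=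
  Matrix.of fun i => rowQ (v i)

def MZ {n : ℕ} (v : Fin (n+2) → (Fin (n+1) → ℤ)) : Matrix (Fin (n+2)) (Fin (n+2)) ℤ :=
  Matrix.of fun i => Fin.snoc (v i) 1

lemma detMQ_int {n : ℕ} (v : Fin (n+2) → (Fin (n+1) → ℤ)) :
    (MQ v).det = ((MZ v).det : ℚ) := by
  have h : MQ v = (MZ v).map (Int.cast : ℤ → ℚ) := by
    funext i j
    refine Fin.lastCases ?_ (fun t => ?_) j
    · simp [MQ, MZ, rowQ, Matrix.map_apply]
    · simp [MQ, MZ, rowQ, Matrix.map_apply, Lq]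
  rw [h]
  rw [show ((MZ v).map (Int.cast : ℤ → ℚ)) = (Int.castRingHom ℚ).mapMatrix (MZ v) from rfl]
  rw [← RingHom.map_det]
  rfl

lemma hm_coord {n k : ℕ} {m : Fin (n+1) → ℤ} {v : Fin k → (Fin (n+1) → ℤ)} {c : Fin k → ℚ}
    (hm : Lq m = ∑ j, c j • Lq (v j)) (t : Fin (n+1)) :
    ((m t : ℤ) : ℚ) = ∑ j, c j * ((v j t : ℤ) : ℚ) := by
  have := congrFun hm t
  simpa [Lq, Finset.sum_apply, Pi.smul_apply, smul_eq_mul] using this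

section EWsec

variable {n : ℕ} {P : Set (Fin (n+1) → ℚ)}

lemma EW (hconv : Convex ℚ P) :
    ∀ D : ℕ, ∀ (v : Fin (n+2) → (Fin (n+1) → ℤ)) (c : Fin (n+2) → ℚ) (m : Fin (n+1) → ℤ),
      (∀ j, Lq (v j) ∈ P) → (∀ j, 0 ≤ c j) → (∑ j, c j = (n : ℚ) + 1) →
      Lq m = ∑ j, c j • Lq (v j) →
      (MZ v).det ≠ 0 → (MZ v).det.natAbs ≤ D →
      ∃ x, Lq x ∈ P ∧ Good P (n : ℚ) (Lq (m - x)) := by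
  intro D
  induction D with
  | zero =>
    intro v c m _ _ _ _ hdet hD
    exact absurd (Int.natAbs_eq_zero.mp (Nat.le_zero.mp hD)) hdet
  | succ D ih =>
    intro v c m hv hc hsum hm hdet hD
    by_cases hbig : ∃ j, 1 ≤ c j
    · obtain ⟨j, hj⟩ := hbig
      refine ⟨v j, hv j, n+2, v, Function.update c j (c j - 1), 0, hv, ?_, ?_,
        fun i => le_refl 0, ?_⟩
      · intro i
        rcases eq_or_ne i j with rfl | h
        · rw [Function.update_self]; linarith
        · rw [Function.update_of_ne h]; exact hc i
      · rw [← Finset.add_sum_erase _ _ (Finset.mem_univ j), Function.update_self]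
        have he : ∑ i ∈ Finset.univ.erase j, Function.update c j (c j - 1) i
            = ∑ i ∈ Finset.univ.erase j, c i :=
          Finset.sum_congr rfl fun i hi => by
            rw [Function.update_of_ne (Finset.ne_of_mem_erase hi)]
        rw [he]
        rw [← Finset.add_sum_erase _ c (Finset.mem_univ j)] at hsum
        linarith
      · rw [add_zero, Lq_sub, hm]
        rw [← Finset.add_sum_erase _ (fun i => Function.update c j (c j - 1) i • Lq (v i))
          (Finset.mem_univ j)]
        have he : ∑ i ∈ Finset.univ.erase j, Function.update c j (c j - 1) i • Lq (v i)
            = ∑ i ∈ Finset.univ.erase j, c i • Lq (v i) :=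
          Finset.sum_congr rfl fun i hi => by
            rw [Function.update_of_ne (Finset.ne_of_mem_erase hi)]
        rw [he, ← Finset.add_sum_erase _ (fun i => c i • Lq (v i)) (Finset.mem_univ j),
          Function.update_self, sub_smul, one_smul]
        abel
    · push_neg at hbig
      obtain ⟨j0, -, hmin⟩ := Finset.exists_min_image Finset.univ c ⟨0, Finset.mem_univ 0⟩
      have ha1 : c j0 < 1 := hbig j0
      have hcard_erase : (Finset.univ.erase j0).card = n + 1 := by
        rw [Finset.card_erase_of_mem (Finset.mem_univ j0)]
        simp
      have hErase : ∑ i ∈ Finset.univ.erase j0, c i = (n : ℚ) + 1 - c j0 := by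
        rw [← Finset.add_sum_erase _ c (Finset.mem_univ j0)] at hsum
        linarith
      have ha0 : 0 < c j0 := by
        by_contra hcon
        push_neg at hcon
        have haz : c j0 = 0 := le_antisymm hcon (hc j0)
        have hlt : ∑ i ∈ Finset.univ.erase j0, c i < ∑ _i ∈ Finset.univ.erase j0, (1:ℚ) :=
          Finset.sum_lt_sum_of_nonempty
            (by rw [← Finset.card_pos, hcard_erase]; omega)
            (fun i _ => hbig i)
        rw [Finset.sum_const, hcard_erase, hErase, haz, nsmul_eq_mul, mul_one] at hlt
        push_cast at hlt
        linarith
      have hβ0 : (0:ℚ) < 1 - c j0 := by linarith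
      set u : Fin (n+1) → ℤ := (∑ j, v j) - m with hu_def
      have hut : ∀ t, ((u t : ℤ) : ℚ) = ∑ j, (1 - c j) * ((v j t : ℤ) : ℚ) := by
        intro t
        have h1 := hm_coord hm t
        have h2 : ((u t : ℤ) : ℚ) = (∑ j, ((v j t : ℤ):ℚ)) - ((m t : ℤ) : ℚ) := by
          rw [hu_def]
          simp only [Pi.sub_apply, Finset.sum_apply]
          push_cast
          ring
        have h3 : ∑ j, (1 - c j) * ((v j t : ℤ):ℚ)
            = (∑ j, ((v j t:ℤ):ℚ)) - ∑ j, c j * ((v j t:ℤ):ℚ) := by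
          rw [← Finset.sum_sub_distrib]
          exact Finset.sum_congr rfl fun j _ => by ring
        rw [h2, h1, h3]
      have hu : Lq u = ∑ j, (1 - c j) • Lq (v j) := by
        funext t
        have := hut t
        simpa [Lq, Finset.sum_apply, Pi.smul_apply, smul_eq_mul] using this
      have hsum1 : ∑ j : Fin (n+2), (1 - c j) = (1 : ℚ) := by
        rw [Finset.sum_sub_distrib, Finset.sum_const, hsum]
        simp
        push_cast
        ring
      have huP : Lq u ∈ P := by
        rw [hu]
        exact sum_mem_P hconv v _ hv (fun j => by linarith [hbig j]) hsum1
      set v' := Function.update v j0 u with hv'_def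
      set c' : Fin (n+2) → ℚ := fun i => if i = j0 then c j0 / (1 - c j0) else (c i - c j0) / (1 - c j0) with hc'_def
      have hv'j0 : v' j0 = u := by rw [hv'_def, Function.update_self]
      have hv'ne : ∀ i, i ≠ j0 → v' i = v i := fun i hi => by
        rw [hv'_def, Function.update_of_ne hi]
      have hc'j0 : c' j0 = c j0 / (1 - c j0) := by rw [hc'_def]; simp
      have hc'ne : ∀ i, i ≠ j0 → c' i = (c i - c j0) / (1 - c j0) := fun i hi => by
        rw [hc'_def]; simp [hi]
      have hv' : ∀ j, Lq (v' j) ∈ P := by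
        intro j
        rcases eq_or_ne j j0 with rfl | h
        · rw [hv'j0]; exact huP
        · rw [hv'ne j h]; exact hv j
      have hc' : ∀ j, 0 ≤ c' j := by
        intro j
        rcases eq_or_ne j j0 with rfl | h
        · rw [hc'j0]; positivity
        · rw [hc'ne j h]
          exact div_nonneg (by linarith [hmin j (Finset.mem_univ j)]) hβ0.le
      have hsum' : ∑ i, c' i = (n : ℚ) + 1 := by
        rw [← Finset.add_sum_erase _ c' (Finset.mem_univ j0), hc'j0]
        have he : ∑ i ∈ Finset.univ.erase j0, c' i
            = ∑ i ∈ Finset.univ.erase j0, (c i - c j0) / (1 - c j0) :=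
          Finset.sum_congr rfl fun i hi => hc'ne i (Finset.ne_of_mem_erase hi)
        rw [he, ← Finset.sum_div, Finset.sum_sub_distrib, hErase, Finset.sum_const, hcard_erase,
          nsmul_eq_mul]
        push_cast
        field_simp
        ring
      have hm' : Lq m = ∑ i, c' i • Lq (v' i) := by
        funext t
        have hmt := hm_coord hm t
        have h2 := hut t
        show ((m t : ℤ) : ℚ) = _
        rw [Finset.sum_apply]
        simp only [Pi.smul_apply, smul_eq_mul]
        rw [← Finset.add_sum_erase _ (fun i => c' i * Lq (v' i) t) (Finset.mem_univ j0)]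
        have he : ∑ i ∈ Finset.univ.erase j0, c' i * Lq (v' i) t
            = ∑ i ∈ Finset.univ.erase j0, ((c i - c j0) / (1 - c j0)) * ((v i t : ℤ) : ℚ) :=
          Finset.sum_congr rfl fun i hi => by
            rw [hc'ne i (Finset.ne_of_mem_erase hi), hv'ne i (Finset.ne_of_mem_erase hi)]
            rfl
        have he2 : ∑ i ∈ Finset.univ.erase j0, ((c i - c j0) / (1 - c j0)) * ((v i t : ℤ) : ℚ)
            = ∑ i, ((c i - c j0) / (1 - c j0)) * ((v i t : ℤ) : ℚ) :=
          Finset.sum_erase _ (by simp)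
        have he3 : ∑ i, ((c i - c j0) / (1 - c j0)) * ((v i t : ℤ) : ℚ)
            = (1/(1 - c j0)) * (∑ i, c i * ((v i t:ℤ):ℚ))
              - (c j0/(1 - c j0)) * (∑ i, ((v i t:ℤ):ℚ)) := by
          rw [Finset.mul_sum, Finset.mul_sum, ← Finset.sum_sub_distrib]
          exact Finset.sum_congr rfl fun i _ => by ring
        have h3' : ∑ j : Fin (n+2), (1 - c j) * ((v j t:ℤ):ℚ)
            = (∑ j, ((v j t:ℤ):ℚ)) - ∑ j, c j * ((v j t:ℤ):ℚ) := by
          rw [← Finset.sum_sub_distrib]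
          exact Finset.sum_congr rfl fun j _ => by ring
        rw [he, he2, he3, hc'j0, hv'j0]
        show ((m t : ℤ) : ℚ) = (c j0 / (1 - c j0)) * ((u t : ℤ) : ℚ) + _
        rw [h2, h3', ← hmt]
        field_simp
        ring
      have hMQ : MQ v' = (MQ v).updateRow j0 (∑ i, (1 - c i) • MQ v i) := by
        funext i
        rcases eq_or_ne i j0 with rfl | h
        · rw [Matrix.updateRow_self]
          funext j
          refine Fin.lastCases ?_ (fun t => ?_) j
          · have : (∑ i, (1 - c i) • MQ v i) (Fin.last (n+1))
                = ∑ i : Fin (n+2), (1 - c i) * 1 := by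
              rw [Finset.sum_apply]
              exact Finset.sum_congr rfl fun i _ => by
                simp [MQ, rowQ, Fin.snoc_last]
            rw [this]
            simp only [mul_one, hsum1]
            simp [MQ, rowQ, hv'j0, Fin.snoc_last]
          · have : (∑ i, (1 - c i) • MQ v i) (Fin.castSucc t)
                = ∑ i : Fin (n+2), (1 - c i) * ((v i t : ℤ) : ℚ) := by
              rw [Finset.sum_apply]
              exact Finset.sum_congr rfl fun i _ => by
                simp [MQ, rowQ, Fin.snoc_castSucc, Lq]
            rw [this, ← hut t]
            simp [MQ, rowQ, hv'j0, Fin.snoc_castSucc, Lq]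
        · rw [Matrix.updateRow_ne h]
          show rowQ (v' i) = rowQ (v i)
          rw [hv'ne i h]
      have hdetq : (MQ v').det = (1 - c j0) * (MQ v).det := by
        rw [hMQ, Matrix.det_updateRow_sum, smul_eq_mul]
      have hdetz : ((MZ v').det : ℚ) = (1 - c j0) * ((MZ v).det : ℚ) := by
        rw [← detMQ_int, ← detMQ_int, hdetq]
      have hdet' : (MZ v').det ≠ 0 := by
        intro h0
        rw [h0, Int.cast_zero] at hdetz
        have h1 : ((MZ v).det : ℚ) ≠ 0 := Int.cast_ne_zero.mpr hdet
        exact (mul_ne_zero hβ0.ne' h1) hdetz.symm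
      have hlt : (MZ v').det.natAbs < (MZ v).det.natAbs := by
        have h1 : |((MZ v').det : ℚ)| < |((MZ v).det : ℚ)| := by
          rw [hdetz, abs_mul, abs_of_pos hβ0]
          have habs : 0 < |((MZ v).det : ℚ)| := abs_pos.mpr (Int.cast_ne_zero.mpr hdet)
          nlinarith
        have h4 : |(MZ v').det| < |(MZ v).det| := by exact_mod_cast h1
        rw [Int.abs_eq_natAbs, Int.abs_eq_natAbs] at h4
        exact_mod_cast h4
      exact ih v' c' m hv' hc' hsum' hm' hdet' (by omega)

end EWsec

section FEsec

variable {n : ℕ} {P : Set (Fin (n+1) → ℚ)}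

lemma good_of_finset {t : ℚ} {x : Fin (n+1) → ℚ} {k : ℕ} (v : Fin k → (Fin (n+1) → ℤ))
    (J : Finset (Fin k)) (c : Fin k → ℚ) (w : Fin (n+1) → ℚ)
    (hv : ∀ j, Lq (v j) ∈ P) (hc : ∀ j ∈ J, 0 ≤ c j) (hsum : ∑ j ∈ J, c j = t)
    (hw : ∀ i, 0 ≤ w i) (hx : x = (∑ j ∈ J, c j • Lq (v j)) + w) : Good P t x := by
  refine ⟨k, v, fun i => if i ∈ J then c i else 0, w, hv, ?_, ?_, hw, ?_⟩
  · intro j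
    show 0 ≤ if j ∈ J then c j else 0
    split_ifs with hj
    · exact hc j hj
    · exact le_refl 0
  · rw [Finset.sum_ite_mem, Finset.univ_inter]; exact hsum
  · rw [hx]
    congr 1
    have h1 : ∀ j : Fin k, (if j ∈ J then c j else 0) • Lq (v j)
        = if j ∈ J then c j • Lq (v j) else 0 := by
      intro j; split_ifs <;> simp
    rw [Finset.sum_congr rfl (fun j _ => h1 j), Finset.sum_ite_mem, Finset.univ_inter]

lemma FE (hconv : Convex ℚ P) {s : ℕ} (hs : n + 1 ≤ s) (m : Fin (n+1) → ℤ) :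
    ∀ (N : ℕ) (k : ℕ) (v : Fin k → (Fin (n+1) → ℤ)) (J : Finset (Fin k)) (c : Fin k → ℚ)
      (w : Fin (n+1) → ℚ),
      (∀ j, Lq (v j) ∈ P) → (∀ j, 0 ≤ c j) → (∑ j ∈ J, c j = (s : ℚ)) → (∀ i, 0 ≤ w i) →
      Lq m = (∑ j ∈ J, c j • Lq (v j)) + w →
      J.card + (Finset.univ.filter fun i => w i ≠ 0).card ≤ N →
      ∃ x, Lq x ∈ P ∧ Good P ((s : ℚ) - 1) (Lq (m - x)) := by
  intro N
  induction N with
  | zero =>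
    intro k v J c w _ _ hsum _ _ hN
    have hJ : J = ∅ := by
      rw [← Finset.card_eq_zero]; omega
    rw [hJ, Finset.sum_empty] at hsum
    have hpos : (0:ℚ) < (s:ℚ) := by exact_mod_cast (by omega : 0 < s)
    linarith
  | succ N ih =>
    intro k v J c w hv hc hsum hw hm hN
    by_cases hbig : ∃ j ∈ J, 1 ≤ c j
    · obtain ⟨j, hjJ, hj⟩ := hbig
      refine ⟨v j, hv j, good_of_finset v J (fun i => if i = j then c i - 1 else c i) w hv
        ?_ ?_ hw ?_⟩
      · intro i _
        show 0 ≤ if i = j then c i - 1 else c i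
        split_ifs with hij
        · subst hij; linarith
        · exact hc i
      · rw [← Finset.add_sum_erase _ _ hjJ]
        have he : ∑ i ∈ J.erase j, (if i = j then c i - 1 else c i) = ∑ i ∈ J.erase j, c i :=
          Finset.sum_congr rfl fun i hi => by rw [if_neg (Finset.ne_of_mem_erase hi)]
        rw [he, if_pos rfl]
        rw [← Finset.add_sum_erase _ c hjJ] at hsum
        linarith
      · rw [Lq_sub, hm]
        rw [← Finset.add_sum_erase _ (fun i => (if i = j then c i - 1 else c i) • Lq (v i)) hjJ]
        have he : ∑ i ∈ J.erase j, (if i = j then c i - 1 else c i) • Lq (v i)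
            = ∑ i ∈ J.erase j, c i • Lq (v i) :=
          Finset.sum_congr rfl fun i hi => by rw [if_neg (Finset.ne_of_mem_erase hi)]
        rw [he, ← Finset.add_sum_erase _ (fun i => c i • Lq (v i)) hjJ, if_pos rfl,
          sub_smul, one_smul]
        abel
    · push_neg at hbig
      have hJne : J.Nonempty := by
        rcases Finset.eq_empty_or_nonempty J with rfl | h
        · rw [Finset.sum_empty] at hsum
          have hpos : (0:ℚ) < (s:ℚ) := by exact_mod_cast (by omega : 0 < s)
          linarith
        · exact h
      have hslt : (s:ℚ) < J.card := by
        rw [← hsum]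
        calc ∑ j ∈ J, c j < ∑ _j ∈ J, (1:ℚ) := Finset.sum_lt_sum_of_nonempty hJne hbig
        _ = J.card := by rw [Finset.sum_const, nsmul_eq_mul, mul_one]
      have hJcard : n + 2 ≤ J.card := by
        have h1 : s < J.card := by exact_mod_cast hslt
        omega
      set E := Finset.univ.filter (fun i => w i ≠ 0) with hE_def
      set G : (↥J ⊕ ↥E) → (Fin (n+2) → ℚ) :=
        Sum.elim (fun j => Fin.snoc (Lq (v ↑j)) 1)
          (fun i => Fin.snoc (Pi.single (↑i : Fin (n+1)) (1:ℚ)) 0) with hG_def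
      by_cases hLI : LinearIndependent ℚ G
      · have hcard : Fintype.card (↥J ⊕ ↥E) ≤ n + 2 := by
          have h1 := hLI.fintype_card_le_finrank
          rwa [Module.finrank_fin_fun] at h1
        rw [Fintype.card_sum, Fintype.card_coe, Fintype.card_coe] at hcard
        have hJn2 : J.card = n + 2 := by omega
        have hEcard : E.card = 0 := by omega
        have hwzero : w = 0 := by
          funext i
          simp only [Pi.zero_apply]
          by_contra hne
          have hiE : i ∈ E := by
            rw [hE_def, Finset.mem_filter]; exact ⟨Finset.mem_univ i, hne⟩
          rw [Finset.card_eq_zero] at hEcard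
          rw [hEcard] at hiE
          exact absurd hiE (Finset.notMem_empty i)
        have hsn : s = n + 1 := by
          have h1 : s < J.card := by exact_mod_cast hslt
          omega
        have e : ↥J ≃ Fin (n+2) := J.equivFin.trans (finCongr hJn2)
        set v2 : Fin (n+2) → (Fin (n+1) → ℤ) := fun t => v ↑(e.symm t) with hv2_def
        set c2 : Fin (n+2) → ℚ := fun t => c ↑(e.symm t) with hc2_def
        have htrans : ∀ (f : Fin k → ℚ), ∑ t, f ↑(e.symm t) = ∑ j ∈ J, f j := by
          intro f
          rw [Equiv.sum_comp e.symm (fun (j : ↥J) => f ↑j), Finset.sum_coe_sort J f]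
        have htransV : ∀ (f : Fin k → (Fin (n+1) → ℚ)), ∑ t, f ↑(e.symm t) = ∑ j ∈ J, f j := by
          intro f
          rw [Equiv.sum_comp e.symm (fun (j : ↥J) => f ↑j), Finset.sum_coe_sort J f]
        have hsum2 : ∑ t, c2 t = (n:ℚ) + 1 := by
          have h1 : ∑ t, c2 t = ∑ j ∈ J, c j := htrans c
          rw [h1, hsum, hsn]
          push_cast
          ring
        have hm2 : Lq m = ∑ t, c2 t • Lq (v2 t) := by
          rw [hm, hwzero, add_zero]
          exact (htransV (fun j => c j • Lq (v j))).symm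
        have hrows : LinearIndependent ℚ (fun t : Fin (n+2) => MQ v2 t) :=
          hLI.comp (Sum.inl ∘ e.symm) (Sum.inl_injective.comp e.symm.injective)
        have hdet2 : (MZ v2).det ≠ 0 := by
          have hIsU : IsUnit (MQ v2) := Matrix.linearIndependent_rows_iff_isUnit.mp hrows
          have h2 : IsUnit (MQ v2).det := (Matrix.isUnit_iff_isUnit_det _).mp hIsU
          have hne : (MQ v2).det ≠ 0 := h2.ne_zero
          rw [detMQ_int] at hne
          exact_mod_cast hne
        obtain ⟨x, hxP, hgood⟩ := EW hconv ((MZ v2).det.natAbs) v2 c2 m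
          (fun t => hv _) (fun t => hc _) hsum2 hm2 hdet2 le_rfl
        refine ⟨x, hxP, ?_⟩
        have hsq : ((s:ℚ) - 1) = (n:ℚ) := by rw [hsn]; push_cast; ring
        rwa [hsq]
      · obtain ⟨g, hgsum, i0', hgi0⟩ := Fintype.not_linearIndependent_iff.mp hLI
        have hlastco : ∑ j : ↥J, g (Sum.inl j) = 0 := by
          have h1 := congrFun hgsum (Fin.last (n+1))
          rw [Finset.sum_apply] at h1
          rw [Fintype.sum_sum_type] at h1
          simp only [Pi.smul_apply, smul_eq_mul, hG_def, Sum.elim_inl, Sum.elim_inr,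
            Fin.snoc_last, mul_one, mul_zero, Finset.sum_const_zero, add_zero,
            Pi.zero_apply] at h1
          exact h1
        have hvecrel : ∀ t : Fin (n+1),
            (∑ j : ↥J, g (Sum.inl j) * Lq (v ↑j) t)
              + (∑ i : ↥E, g (Sum.inr i) * ((Pi.single (↑i : Fin (n+1)) (1:ℚ) : Fin (n+1) → ℚ)) t) = 0 := by
          intro t
          have h1 := congrFun hgsum (Fin.castSucc t)
          rw [Finset.sum_apply] at h1
          rw [Fintype.sum_sum_type] at h1
          simp only [Pi.smul_apply, smul_eq_mul, hG_def, Sum.elim_inl, Sum.elim_inr,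
            Fin.snoc_castSucc, Pi.zero_apply] at h1
          exact h1
        have hinlne : ∃ j : ↥J, g (Sum.inl j) ≠ 0 := by
          by_contra hco
          push_neg at hco
          cases i0' with
          | inl j => exact hgi0 (hco j)
          | inr i =>
            have h1 := hvecrel ↑i
            have h2 : ∑ j : ↥J, g (Sum.inl j) * Lq (v ↑j) ↑i = 0 :=
              Finset.sum_eq_zero fun j _ => by rw [hco j, zero_mul]
            rw [h2, zero_add] at h1
            have h3 : ∑ i' : ↥E, g (Sum.inr i') * ((Pi.single (↑i' : Fin (n+1)) (1:ℚ) : Fin (n+1) → ℚ)) ↑i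
                = g (Sum.inr i) := by
              rw [Finset.sum_eq_single i]
              · rw [Pi.single_eq_same, mul_one]
              · intro b _ hb
                have hne : (↑i : Fin (n+1)) ≠ ↑b := fun hh => hb (Subtype.ext hh.symm)
                rw [Pi.single_eq_of_ne hne, mul_zero]
              · intro hni; exact absurd (Finset.mem_univ _) hni
            rw [h3] at h1
            exact hgi0 h1
        have hpos : ∃ j : ↥J, 0 < g (Sum.inl j) := by
          by_contra hco
          push_neg at hco
          obtain ⟨j1, hj1⟩ := hinlne
          have hlt : ∑ j : ↥J, g (Sum.inl j) < 0 := by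
            have h2 := Finset.sum_lt_sum (fun j (_ : j ∈ Finset.univ) => hco j)
              ⟨j1, Finset.mem_univ j1, lt_of_le_of_ne (hco j1) hj1⟩
            simpa using h2
          rw [hlastco] at hlt
          exact lt_irrefl 0 hlt
        set Cf : (↥J ⊕ ↥E) → ℚ := Sum.elim (fun j => c ↑j) (fun i => w ↑i) with hCf_def
        have hCf0 : ∀ a, 0 ≤ Cf a := by
          intro a
          cases a with
          | inl j => exact hc ↑j
          | inr i => exact hw ↑i
        set A : Finset (↥J ⊕ ↥E) := Finset.univ.filter (fun a => 0 < g a) with hA_def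
        have hAne : A.Nonempty := by
          obtain ⟨j1, hj1⟩ := hpos
          exact ⟨Sum.inl j1, by rw [hA_def, Finset.mem_filter]; exact ⟨Finset.mem_univ _, hj1⟩⟩
        obtain ⟨a0, ha0A, hmin⟩ := Finset.exists_min_image A (fun a => Cf a / g a) hAne
        have hga0 : 0 < g a0 := by
          rw [hA_def] at ha0A
          exact (Finset.mem_filter.mp ha0A).2
        set t0 : ℚ := Cf a0 / g a0 with ht0_def
        have ht0 : 0 ≤ t0 := div_nonneg (hCf0 a0) hga0.le
        have hkey : ∀ a, 0 ≤ Cf a - t0 * g a := by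
          intro a
          by_cases hga : 0 < g a
          · have hmem : a ∈ A := by
              rw [hA_def, Finset.mem_filter]
              exact ⟨Finset.mem_univ _, hga⟩
            have h1 : t0 ≤ Cf a / g a := hmin a hmem
            rw [le_div_iff₀ hga] at h1
            linarith
          · push_neg at hga
            have h2 : t0 * g a ≤ 0 := mul_nonpos_of_nonneg_of_nonpos ht0 hga
            linarith [hCf0 a]
        set gJ : Fin k → ℚ := fun j => if h : j ∈ J then g (Sum.inl ⟨j, h⟩) else 0 with hgJ_def
        set gE : Fin (n+1) → ℚ := fun i => if h : i ∈ E then g (Sum.inr ⟨i, h⟩) else 0 with hgE_def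
        set c1 : Fin k → ℚ := fun j => c j - t0 * gJ j with hc1_def
        set w1 : Fin (n+1) → ℚ := fun i => w i - t0 * gE i with hw1_def
        have hgJcoe : ∀ j : ↥J, gJ ↑j = g (Sum.inl j) := by
          intro j
          simp only [hgJ_def]
          rw [dif_pos j.2]
        have hgEcoe : ∀ i : ↥E, gE ↑i = g (Sum.inr i) := by
          intro i
          simp only [hgE_def]
          rw [dif_pos i.2]
        have hc1 : ∀ j, 0 ≤ c1 j := by
          intro j
          simp only [hc1_def]
          by_cases hj : j ∈ J
          · have h1 := hkey (Sum.inl ⟨j, hj⟩)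
            simp only [hCf_def, Sum.elim_inl] at h1
            have h2 : gJ j = g (Sum.inl ⟨j, hj⟩) := hgJcoe ⟨j, hj⟩
            rw [h2]
            exact h1
          · have h2 : gJ j = 0 := by simp only [hgJ_def]; rw [dif_neg hj]
            rw [h2, mul_zero, sub_zero]
            exact hc j
        have hw1nn : ∀ i, 0 ≤ w1 i := by
          intro i
          simp only [hw1_def]
          by_cases hi : i ∈ E
          · have h1 := hkey (Sum.inr ⟨i, hi⟩)
            simp only [hCf_def, Sum.elim_inr] at h1
            have h2 : gE i = g (Sum.inr ⟨i, hi⟩) := hgEcoe ⟨i, hi⟩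
            rw [h2]
            exact h1
          · have h2 : gE i = 0 := by simp only [hgE_def]; rw [dif_neg hi]
            rw [h2, mul_zero, sub_zero]
            exact hw i
        have hgJsum : ∑ j ∈ J, gJ j = 0 := by
          have h1 : ∑ j : ↥J, gJ ↑j = ∑ j : ↥J, g (Sum.inl j) :=
            Finset.sum_congr rfl (fun j _ => hgJcoe j)
          rw [← Finset.sum_coe_sort J gJ, h1, hlastco]
        have hgJv : ∀ t, ∑ j ∈ J, gJ j * Lq (v j) t
            = ∑ j : ↥J, g (Sum.inl j) * Lq (v ↑j) t := by
          intro t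
          rw [← Finset.sum_coe_sort J (fun j => gJ j * Lq (v j) t)]
          exact Finset.sum_congr rfl (fun j _ => by rw [hgJcoe j])
        have hgEv : ∀ t, gE t = ∑ i : ↥E, g (Sum.inr i) * ((Pi.single (↑i : Fin (n+1)) (1:ℚ) : Fin (n+1) → ℚ)) t := by
          intro t
          by_cases ht : t ∈ E
          · rw [Finset.sum_eq_single (⟨t, ht⟩ : ↥E)]
            · rw [Pi.single_eq_same, mul_one]
              exact (hgEcoe ⟨t, ht⟩).symm ▸ (hgEcoe ⟨t, ht⟩)
            · intro b _ hb
              have hne : t ≠ (↑b : Fin (n+1)) := fun hh => hb (Subtype.ext hh.symm)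
              rw [Pi.single_eq_of_ne hne, mul_zero]
            · intro hni; exact absurd (Finset.mem_univ _) hni
          · have h2 : gE t = 0 := by simp only [hgE_def]; rw [dif_neg ht]
            rw [h2]
            symm
            apply Finset.sum_eq_zero
            intro i _
            have hne : t ≠ (↑i : Fin (n+1)) := fun hh => ht (hh ▸ i.2)
            rw [Pi.single_eq_of_ne hne, mul_zero]
        have hsum1 : ∑ j ∈ J, c1 j = (s:ℚ) := by
          simp only [hc1_def]
          rw [Finset.sum_sub_distrib, ← Finset.mul_sum, hgJsum, mul_zero, sub_zero, hsum]
        have hm1 : Lq m = (∑ j ∈ J, c1 j • Lq (v j)) + w1 := by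
          funext t
          have hmt := congrFun hm t
          rw [Pi.add_apply, Finset.sum_apply] at hmt
          simp only [Pi.smul_apply, smul_eq_mul] at hmt
          have hrel := hvecrel t
          rw [← hgJv t, ← hgEv t] at hrel
          rw [Pi.add_apply, Finset.sum_apply]
          simp only [Pi.smul_apply, smul_eq_mul, hc1_def, hw1_def]
          have hexp : ∑ j ∈ J, (c j - t0 * gJ j) * Lq (v j) t
              = ∑ j ∈ J, c j * Lq (v j) t - t0 * ∑ j ∈ J, gJ j * Lq (v j) t := by
            rw [Finset.mul_sum, ← Finset.sum_sub_distrib]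
            exact Finset.sum_congr rfl fun j _ => by ring
          rw [hexp]
          linear_combination hmt + t0 * hrel
        cases a0 with
        | inl j0 =>
          have hzero : c1 ↑j0 = 0 := by
            simp only [hc1_def]
            have h2 : gJ ↑j0 = g (Sum.inl j0) := hgJcoe j0
            rw [h2, ht0_def]
            simp only [hCf_def, Sum.elim_inl]
            field_simp; simp
          set J' := J.erase ↑j0 with hJ'_def
          have hsum' : ∑ j ∈ J', c1 j = (s:ℚ) := by
            rw [hJ'_def, Finset.sum_erase _ hzero, hsum1]
          have hm'' : Lq m = (∑ j ∈ J', c1 j • Lq (v j)) + w1 := by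
            have h3 : ∑ j ∈ J', c1 j • Lq (v j) = ∑ j ∈ J, c1 j • Lq (v j) := by
              rw [hJ'_def]
              exact Finset.sum_erase _ (by rw [hzero, zero_smul])
            rw [h3]
            exact hm1
          have hE1 : (Finset.univ.filter fun i => w1 i ≠ 0) ⊆ E := by
            intro i hi
            rw [Finset.mem_filter] at hi
            rw [hE_def, Finset.mem_filter]
            refine ⟨Finset.mem_univ i, fun hwi => ?_⟩
            apply hi.2
            have hnotE : i ∉ E := by
              rw [hE_def, Finset.mem_filter]
              push_neg
              exact fun _ => hwi
            have h2 : gE i = 0 := by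
              simp only [hgE_def]
              rw [dif_neg hnotE]
            simp only [hw1_def]
            rw [hwi, h2, mul_zero, sub_zero]
          have hcards : J'.card + (Finset.univ.filter fun i => w1 i ≠ 0).card ≤ N := by
            have h1 : J'.card = J.card - 1 := by rw [hJ'_def, Finset.card_erase_of_mem j0.2]
            have h2 : (Finset.univ.filter fun i => w1 i ≠ 0).card ≤ E.card :=
              Finset.card_le_card hE1
            have h3 : 1 ≤ J.card := Finset.card_pos.mpr hJne
            omega
          exact ih k v J' c1 w1 hv hc1 hsum' hw1nn hm'' hcards
        | inr i0 =>
          have hzero : w1 ↑i0 = 0 := by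
            simp only [hw1_def]
            have h2 : gE ↑i0 = g (Sum.inr i0) := hgEcoe i0
            rw [h2, ht0_def]
            simp only [hCf_def, Sum.elim_inr]
            field_simp; simp
          have hE1 : (Finset.univ.filter fun i => w1 i ≠ 0) ⊆ E.erase ↑i0 := by
            intro i hi
            rw [Finset.mem_filter] at hi
            rw [Finset.mem_erase]
            constructor
            · intro hh
              rw [hh] at hi
              exact hi.2 hzero
            · rw [hE_def, Finset.mem_filter]
              refine ⟨Finset.mem_univ i, fun hwi => ?_⟩
              apply hi.2
              have hnotE : i ∉ E := by
                rw [hE_def, Finset.mem_filter]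
                push_neg
                exact fun _ => hwi
              have h2 : gE i = 0 := by
                simp only [hgE_def]
                rw [dif_neg hnotE]
              simp only [hw1_def]
              rw [hwi, h2, mul_zero, sub_zero]
          have hcards : J.card + (Finset.univ.filter fun i => w1 i ≠ 0).card ≤ N := by
            have h2 := Finset.card_le_card hE1
            rw [Finset.card_erase_of_mem i0.2] at h2
            have h3 : 1 ≤ E.card := Finset.card_pos.mpr ⟨↑i0, i0.2⟩
            omega
          exact ih k v J c1 w1 hv hc1 hsum1 hw1nn hm1 hcards

end FEsec


/-- for `σ∨ = ℚ^{n+1}_{≥0}` and `P` an integral `σ∨`-polyhedron contained in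
`σ∨`, `P` is normal iff `(sP) ∩ ℤ^{n+1} = E_{[s,P]}` for all `s ∈ {1, …, n}`: checking the
normality condition for the first `n` dilates suffices (Reid–Roberts–Vitulli criterion). -/
theorem statement15 {n : ℕ} (P : Set (Fin (n + 1) → ℚ))
    (hP : IsIntegralPoly (orthant n) P) (hPsub : P ⊆ orthant n) :
    (∀ s : ℕ, 1 ≤ s → ∀ m : Fin (n + 1) → ℤ,
        Lq m ∈ mink (orthant n) P s ↔
          ∃ f : Fin s → (Fin (n + 1) → ℤ), (∀ i, Lq (f i) ∈ P) ∧ m = ∑ i, f i) ↔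
    (∀ s : ℕ, 1 ≤ s → s ≤ n → ∀ m : Fin (n + 1) → ℤ,
        Lq m ∈ mink (orthant n) P s ↔
          ∃ f : Fin s → (Fin (n + 1) → ℤ), (∀ i, Lq (f i) ∈ P) ∧ m = ∑ i, f i) := by
  obtain ⟨F, hFne, hPF⟩ := hP
  constructor
  · intro h s hs1 _ m
    exact h s hs1 m
  · intro h
    have hconv : Convex ℚ P := convex_P hPF
    have main : ∀ s : ℕ, 1 ≤ s → ∀ m : Fin (n+1) → ℤ, Lq m ∈ mink (orthant n) P s →
        ∃ f : Fin s → (Fin (n + 1) → ℤ), (∀ i, Lq (f i) ∈ P) ∧ m = ∑ i, f i := by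
      intro s
      induction s using Nat.strong_induction_on with
      | _ s ihs =>
        intro hs1 m hm
        by_cases hsn : s ≤ n
        · exact (h s hs1 hsn m).mp hm
        · have hs' : n + 1 ≤ s := by omega
          have hgood : Good P (s:ℚ) (Lq m) := mink_to_good hPF s hs1 _ hm
          obtain ⟨k, v, c, w, hv, hc, hsum, hw, hmeq⟩ := hgood
          obtain ⟨x, hxP, hgood'⟩ := FE hconv hs' m (k + (n+1)) k v Finset.univ c w hv hc
            hsum hw hmeq
            (by
              have h1 : (Finset.univ.filter fun i => w i ≠ 0).card
                  ≤ (Finset.univ : Finset (Fin (n+1))).card := Finset.card_filter_le _ _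
              simp only [Finset.card_univ, Fintype.card_fin] at h1 ⊢
              omega)
          obtain ⟨t, rfl⟩ : ∃ t, s = t + 1 := ⟨s - 1, by omega⟩
          rcases Nat.eq_zero_or_pos t with rfl | ht
          · obtain ⟨k2, v2, c2, w2, _, hc2, hsum2, hw2, heq2⟩ := hgood'
            have hzsum0 : ∑ j, c2 j = 0 := by rw [hsum2]; push_cast; ring
            have hc2z : ∀ j, c2 j = 0 := fun j =>
              ((Finset.sum_eq_zero_iff_of_nonneg (fun i _ => hc2 i)).mp hzsum0) j
                (Finset.mem_univ j)
            have hnn : ∀ i, 0 ≤ Lq (m - x) i := by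
              intro i
              have hzsum : ∑ j, c2 j • Lq (v2 j) = 0 :=
                Finset.sum_eq_zero fun j _ => by rw [hc2z j, zero_smul]
              rw [heq2, hzsum, zero_add]
              exact hw2 i
            refine ⟨fun _ => m, fun _ => ?_, by simp⟩
            have hdecomp : Lq m = Lq x + Lq (m - x) := by rw [Lq_sub]; abel
            rw [hdecomp]
            exact add_orth_mem hPF hxP hnn
          · have hcast : ((t+1 : ℕ):ℚ) - 1 = ((t : ℕ):ℚ) := by push_cast; ring
            rw [hcast] at hgood'
            have hmem : Lq (m - x) ∈ mink (orthant n) P t := good_to_mink hPF ht hgood'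
            obtain ⟨f', hf', hsum'⟩ := ihs t (by omega) (by omega) (m - x) hmem
            refine ⟨Fin.snoc f' x, ?_, ?_⟩
            · intro i
              refine Fin.lastCases ?_ (fun j => ?_) i
              · rw [Fin.snoc_last]; exact hxP
              · rw [Fin.snoc_castSucc]; exact hf' j
            · rw [Fin.sum_univ_castSucc]
              have he : ∑ i : Fin t, (Fin.snoc f' x : Fin (t+1) → (Fin (n+1) → ℤ))
                  (Fin.castSucc i) = ∑ i, f' i :=
                Finset.sum_congr rfl fun i _ => by rw [Fin.snoc_castSucc]
              rw [he, Fin.snoc_last, ← hsum']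
              abel
    intro s hs1 m
    constructor
    · exact fun hm => main s hs1 m hm
    · rintro ⟨f, hf, rfl⟩
      exact sum_mem_mink s hs1 f hf


end Paper
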